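/- Let n(t) ∈ ℝ₊^{Ω} solve the linear ODE dn/dt = A n with n(0) = n⁰, and set N_α(t) = Σ_{j∈α} n_j(t). Then {N_α} satisfies the generalized RFE system, where the fluxes are given by S_α(t) = Σ_{β∈X∖{α}} A_{αβ} n_β(t) and (J_α(t))_i = (n_α(t))_i · Σ_{β∈X∖{α}} (e_β^⊤ A_{βα})_i for i ∈ α, the kernels are G_{βα}(t) = A_{αβ} exp(t A_{ββ}) and (K_α(t))_{ij} = Σ_{β∈X∖{α}} (e_β^⊤ A_{βα})_i (exp(t A_{αα}))_{ij} for i, j ∈ α, and the forcing functions are S_α⁰(t) = Σ_{β∈X∖{α}} G_{βα}(t) n_β⁰ and J_α⁰(t) = K_α(t) n_α⁰. -/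

import Mathlib

open MeasureTheory Matrix NormedSpace

variable {Ω X : Type*}

/-- The block `A_{αβ}` of a matrix `A : ℝ^{Ω×Ω}` with respect to the partition of `Ω`
into the fibers of `π : Ω → X` (rows indexed by the compartment `α`, columns by `β`). -/
def blockM [DecidableEq X] (A : Matrix Ω Ω ℝ) (π : Ω → X) (α β : X) :
    Matrix {i : Ω // π i = α} {j : Ω // π j = β} ℝ :=
  fun i j => A i.1 j.1

namespace RFEAux

variable {ι : Type*} [Fintype ι] [DecidableEq ι]

attribute [local instance] Matrix.linftyOpNormedRing Matrix.linftyOpNormedAlgebra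

lemma hasDerivAt_expEntry (B : Matrix ι ι ℝ) (t s : ℝ) (i j : ι) :
    HasDerivAt (fun u => exp ((t - u) • B) i j)
      (-((exp ((t - s) • B) * B) i j)) s := by
  have h1 : HasDerivAt (fun u : ℝ => exp (u • B)) (exp ((t - s) • B) * B) (t - s) :=
    hasDerivAt_exp_smul_const B (t - s)
  have h2 : HasDerivAt (fun u : ℝ => t - u) (-1) s := (hasDerivAt_id s).const_sub t
  have h3 := h1.scomp s h2
  have h4 := ((Matrix.entryLinearMap ℝ ℝ i j).toContinuousLinearMap.hasFDerivAt).comp_hasDerivAt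
    s h3
  rw [neg_one_smul] at h4
  exact h4

lemma continuous_expEntry (B : Matrix ι ι ℝ) (t : ℝ) (i j : ι) :
    Continuous fun u => exp ((t - u) • B) i j :=
  continuous_iff_continuousAt.2 fun s => (hasDerivAt_expEntry B t s i j).continuousAt

lemma voc (B : Matrix ι ι ℝ) (m f : ℝ → ι → ℝ)
    (hf : ∀ j, Continuous fun s => f s j)
    (hm : ∀ i t, HasDerivAt (fun s => m s i) (B.mulVec (m t) i + f t i) t)
    (t : ℝ) (i : ι) :
    m t i = (exp (t • B)).mulVec (m 0) i
      + ∫ s in (0:ℝ)..t, (exp ((t - s) • B)).mulVec (f s) i := by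
  set h : ℝ → ℝ := fun s => (exp ((t - s) • B)).mulVec (m s) i with hh
  have hd : ∀ s, HasDerivAt h ((exp ((t - s) • B)).mulVec (f s) i) s := by
    intro s
    have : HasDerivAt h
        (∑ j, (-((exp ((t - s) • B) * B) i j) * m s j
          + exp ((t - s) • B) i j * (B.mulVec (m s) j + f s j))) s := by
      apply HasDerivAt.fun_sum
      intro j _
      exact (hasDerivAt_expEntry B t s i j).mul (hm j s)
    convert this using 1
    simp only [Matrix.mulVec, dotProduct, Matrix.mul_apply, Finset.sum_add_distrib,
      neg_mul, Finset.sum_neg_distrib, mul_add, Finset.sum_mul, Finset.mul_sum]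
    rw [Finset.sum_comm (γ := ι)]
    ring_nf
  have hcont : Continuous fun s => (exp ((t - s) • B)).mulVec (f s) i := by
    simp only [Matrix.mulVec, dotProduct]
    exact continuous_finset_sum _ fun j _ => (continuous_expEntry B t i j).mul (hf j)
  have hint : IntervalIntegrable (fun s => (exp ((t - s) • B)).mulVec (f s) i)
      volume 0 t := hcont.intervalIntegrable 0 t
  have hFTC := intervalIntegral.integral_eq_sub_of_hasDerivAt (fun s _ => hd s) hint
  have ht : h t = m t i := by simp [hh]
  have h0 : h 0 = (exp (t • B)).mulVec (m 0) i := by simp [hh]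
  rw [ht, h0] at hFTC
  linarith

lemma mulVec_intervalIntegral {κ : Type*} (C : Matrix κ ι ℝ)
    (g : ℝ → ι → ℝ) (a b : ℝ)
    (hg : ∀ j, IntervalIntegrable (fun s => g s j) volume a b) (i : κ) :
    C.mulVec (fun j => ∫ s in a..b, g s j) i = ∫ s in a..b, C.mulVec (g s) i := by
  simp only [Matrix.mulVec, dotProduct]
  rw [intervalIntegral.integral_finset_sum (fun j _ => (hg j).const_mul (C i j))]
  simp [intervalIntegral.integral_const_mul]

lemma intervalIntegral_pi_apply (F : ℝ → ι → ℝ) (a b : ℝ)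
    (hF : IntervalIntegrable F volume a b) (i : ι) :
    (∫ s in a..b, F s) i = ∫ s in a..b, F s i := by
  have := (ContinuousLinearMap.proj (R := ℝ) (φ := fun _ : ι => ℝ) i).intervalIntegral_comp_comm hF
  simpa using this.symm

end RFEAux

theorem ode_to_genRFE [Fintype Ω] [DecidableEq Ω] [Fintype X] [DecidableEq X]
    (A : Matrix Ω Ω ℝ) (π : Ω → X)
    (hoffdiag : ∀ i j, i ≠ j → 0 ≤ A i j)
    (hcolsum : ∀ j, ∑ i, A i j = 0)
    (n : ℝ → Ω → ℝ) (n0 : Ω → ℝ)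
    (hODE : ∀ i t, HasDerivAt (fun s => n s i) (A.mulVec (n t) i) t)
    (hinit : n 0 = n0)
    (hnonneg : ∀ t, 0 ≤ t → ∀ i, 0 ≤ n t i)
    -- the compartment concentrations
    (N : X → ℝ → ℝ) (hN : ∀ α t, N α t = ∑ i : {i : Ω // π i = α}, n t i.1)
    -- the fluxes
    (S J : (α : X) → ℝ → {i : Ω // π i = α} → ℝ)
    (hS : ∀ α t, S α t = ∑ β ∈ Finset.univ.erase α,
        (blockM A π α β).mulVec (fun j => n t j.1))
    (hJ : ∀ α t i, J α t i = n t i.1 *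
        ∑ β ∈ Finset.univ.erase α, ∑ k : {k : Ω // π k = β}, A k.1 i.1)
    -- the kernels
    (G : (β α : X) → ℝ → Matrix {i : Ω // π i = α} {j : Ω // π j = β} ℝ)
    (hG : ∀ β α t, G β α t = blockM A π α β * exp (t • blockM A π β β))
    (K : (α : X) → ℝ → Matrix {i : Ω // π i = α} {i : Ω // π i = α} ℝ)
    (hK : ∀ α t i j, K α t i j = ∑ β ∈ Finset.univ.erase α,
        (∑ k : {k : Ω // π k = β}, A k.1 i.1) * exp (t • blockM A π α α) i j)
    -- the forcing functions
    (S0 J0 : (α : X) → ℝ → {i : Ω // π i = α} → ℝ)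
    (hS0 : ∀ α t, S0 α t = ∑ β ∈ Finset.univ.erase α,
        (G β α t).mulVec (fun j => n0 j.1))
    (hJ0 : ∀ α t, J0 α t = (K α t).mulVec (fun i => n0 i.1)) :
    -- conclusion: the generalized RFE system holds
    (∀ α t, 0 ≤ t → S α t = S0 α t + ∑ β ∈ Finset.univ.erase α,
        ∫ s in (0:ℝ)..t, (G β α (t - s)).mulVec (S β s)) ∧
    (∀ α t, 0 ≤ t → J α t = J0 α t +
        ∫ s in (0:ℝ)..t, (K α (t - s)).mulVec (S α s)) ∧
    (∀ α t, HasDerivAt (N α) ((∑ i, S α t i) - (∑ i, J α t i)) t) ∧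
    (∀ α, N α 0 = ∑ i : {i : Ω // π i = α}, n0 i.1) := by
  classical
  -- continuity of the solution and of the fluxes
  have hncont : ∀ j, Continuous fun s => n s j :=
    fun j => continuous_iff_continuousAt.2 fun t => (hODE j t).continuousAt
  have hScont : ∀ (α : X) (i : {i : Ω // π i = α}), Continuous fun s => S α s i := by
    intro α i
    have he : (fun s => S α s i) = fun s => ∑ β ∈ Finset.univ.erase α,
        ∑ j : {j : Ω // π j = β}, blockM A π α β i j * n s j.1 := by
      funext s
      rw [hS]
      simp [Finset.sum_apply, Matrix.mulVec, dotProduct]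
    rw [he]
    exact continuous_finset_sum _ fun β _ =>
      continuous_finset_sum _ fun j _ => continuous_const.mul (hncont j.1)
  -- splitting of the vector field into intra- and inter-compartment parts
  have hsplit : ∀ (α : X) (t : ℝ) (i : {i : Ω // π i = α}),
      A.mulVec (n t) i.1 = (blockM A π α α).mulVec (fun j => n t j.1) i + S α t i := by
    intro α t i
    have h1 : ∑ j, A i.1 j * n t j
        = ∑ β : X, ∑ j : {j : Ω // π j = β}, A i.1 j.1 * n t j.1 :=
      (Fintype.sum_fiberwise π (fun j => A i.1 j * n t j)).symm
    have h2 : ∑ β : X, ∑ j : {j : Ω // π j = β}, A i.1 j.1 * n t j.1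
        = (∑ β ∈ Finset.univ.erase α, ∑ j : {j : Ω // π j = β}, A i.1 j.1 * n t j.1)
          + ∑ j : {j : Ω // π j = α}, A i.1 j.1 * n t j.1 :=
      (Finset.sum_erase_add _ _ (Finset.mem_univ α)).symm
    rw [hS]
    simp only [Matrix.mulVec, dotProduct, Finset.sum_apply, blockM]
    rw [h1, h2, add_comm]
  have hODE' : ∀ (α : X) (i : {i : Ω // π i = α}) (t : ℝ),
      HasDerivAt (fun s => n s i.1)
        ((blockM A π α α).mulVec (fun j => n t j.1) i + S α t i) t := by
    intro α i t
    have := hODE i.1 t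
    rwa [hsplit α t i] at this
  -- variation of constants for each compartment
  have hvoc : ∀ (α : X) (t : ℝ) (i : {i : Ω // π i = α}),
      n t i.1 = (exp (t • blockM A π α α)).mulVec (fun j => n0 j.1) i
        + ∫ s in (0:ℝ)..t, (exp ((t - s) • blockM A π α α)).mulVec (S α s) i := by
    intro α t i
    have := RFEAux.voc (blockM A π α α) (fun s j => n s j.1) (S α)
      (hScont α) (fun j t' => hODE' α j t') t i
    simpa only [hinit] using this
  -- auxiliary continuity facts
  have hexpS : ∀ (δ : X) (t' : ℝ) (j : {j : Ω // π j = δ}),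
      Continuous fun s => (exp ((t' - s) • blockM A π δ δ)).mulVec (S δ s) j := by
    intro δ t' j
    simp only [Matrix.mulVec, dotProduct]
    exact continuous_finset_sum _ fun k _ =>
      (RFEAux.continuous_expEntry _ t' j k).mul (hScont δ k)
  refine ⟨?_, ?_, ?_, ?_⟩
  · -- the renewal equation for S
    intro α t _
    have hGScont : ∀ β : X, ∀ i : {i : Ω // π i = α},
        Continuous fun s => (G β α (t - s)).mulVec (S β s) i := by
      intro β i
      have he : (fun s => (G β α (t - s)).mulVec (S β s) i)
          = fun s => (blockM A π α β).mulVec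
              ((exp ((t - s) • blockM A π β β)).mulVec (S β s)) i := by
        funext s
        rw [hG, ← Matrix.mulVec_mulVec]
      rw [he]
      simp only [Matrix.mulVec, dotProduct]
      exact continuous_finset_sum _ fun j _ => continuous_const.mul (by
        simpa only [Matrix.mulVec, dotProduct] using hexpS β t j)
    have hGSint : ∀ β : X, IntervalIntegrable
        (fun s => (G β α (t - s)).mulVec (S β s)) volume 0 t := by
      intro β
      exact (continuous_pi fun i => hGScont β i).intervalIntegrable 0 t
    funext i
    have key : ∀ β ∈ Finset.univ.erase α,
        (blockM A π α β).mulVec (fun j => n t j.1) i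
          = (G β α t).mulVec (fun j => n0 j.1) i
            + ∫ s in (0:ℝ)..t, (G β α (t - s)).mulVec (S β s) i := by
      intro β _
      have h1 : (fun j : {j : Ω // π j = β} => n t j.1)
          = fun j => (exp (t • blockM A π β β)).mulVec (fun k => n0 k.1) j
              + ∫ s in (0:ℝ)..t, (exp ((t - s) • blockM A π β β)).mulVec (S β s) j := by
        funext j; exact hvoc β t j
      rw [h1]
      have h2 : (blockM A π α β).mulVec
          (fun j => (exp (t • blockM A π β β)).mulVec (fun k => n0 k.1) j
              + ∫ s in (0:ℝ)..t, (exp ((t - s) • blockM A π β β)).mulVec (S β s) j) i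
          = (blockM A π α β).mulVec
              ((exp (t • blockM A π β β)).mulVec (fun k => n0 k.1)) i
            + (blockM A π α β).mulVec
              (fun j => ∫ s in (0:ℝ)..t,
                (exp ((t - s) • blockM A π β β)).mulVec (S β s) j) i := by
        simp [Matrix.mulVec, dotProduct, mul_add, Finset.sum_add_distrib]
      rw [h2]
      congr 1
      · rw [Matrix.mulVec_mulVec, ← hG]
      · rw [RFEAux.mulVec_intervalIntegral (blockM A π α β)
          (fun s j => (exp ((t - s) • blockM A π β β)).mulVec (S β s) j) 0 t
          (fun j => (hexpS β t j).intervalIntegrable 0 t) i]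
        apply intervalIntegral.integral_congr
        intro s _
        show (blockM A π α β *ᵥ (exp ((t - s) • blockM A π β β) *ᵥ S β s)) i = _
        rw [Matrix.mulVec_mulVec, ← hG]
    calc S α t i = ∑ β ∈ Finset.univ.erase α,
          (blockM A π α β).mulVec (fun j => n t j.1) i := by
            rw [hS]; simp [Finset.sum_apply]
      _ = ∑ β ∈ Finset.univ.erase α,
            ((G β α t).mulVec (fun j => n0 j.1) i
              + ∫ s in (0:ℝ)..t, (G β α (t - s)).mulVec (S β s) i) :=
            Finset.sum_congr rfl key
      _ = S0 α t i + ∑ β ∈ Finset.univ.erase α,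
            ∫ s in (0:ℝ)..t, (G β α (t - s)).mulVec (S β s) i := by
            rw [Finset.sum_add_distrib, hS0]; simp [Finset.sum_apply]
      _ = (S0 α t + ∑ β ∈ Finset.univ.erase α,
            ∫ s in (0:ℝ)..t, (G β α (t - s)).mulVec (S β s)) i := by
            simp only [Pi.add_apply, Finset.sum_apply]
            congr 1
            exact Finset.sum_congr rfl fun β hβ =>
              (RFEAux.intervalIntegral_pi_apply _ 0 t (hGSint β) i).symm
  · -- the renewal equation for J
    intro α t _
    funext i
    set c : ℝ := ∑ β ∈ Finset.univ.erase α, ∑ k : {k : Ω // π k = β}, A k.1 i.1 with hc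
    have hKc : ∀ (t' : ℝ) (j : {j : Ω // π j = α}),
        K α t' i j = c * exp (t' • blockM A π α α) i j := by
      intro t' j
      rw [hK, hc, Finset.sum_mul]
    have hKScont : ∀ i' : {i : Ω // π i = α},
        Continuous fun s => (K α (t - s)).mulVec (S α s) i' := by
      intro i'
      have he : (fun s => (K α (t - s)).mulVec (S α s) i')
          = fun s => ∑ j, K α (t - s) i' j * S α s j := by
        funext s; rfl
      rw [he]
      refine continuous_finset_sum _ fun j _ => Continuous.mul ?_ (hScont α j)
      have : (fun s => K α (t - s) i' j)
          = fun s => ∑ β ∈ Finset.univ.erase α,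
              (∑ k : {k : Ω // π k = β}, A k.1 i'.1)
                * exp ((t - s) • blockM A π α α) i' j := by
        funext s; rw [hK]
      rw [this]
      exact continuous_finset_sum _ fun β _ =>
        continuous_const.mul (RFEAux.continuous_expEntry _ t i' j)
    have hKSint : IntervalIntegrable (fun s => (K α (t - s)).mulVec (S α s)) volume 0 t :=
      (continuous_pi fun i' => hKScont i').intervalIntegrable 0 t
    have hJ0i : J0 α t i = c * (exp (t • blockM A π α α)).mulVec (fun j => n0 j.1) i := by
      rw [hJ0]
      simp only [Matrix.mulVec, dotProduct, Finset.mul_sum]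
      exact Finset.sum_congr rfl fun j _ => by rw [hKc t j]; ring
    have hIapp : (∫ s in (0:ℝ)..t, (K α (t - s)).mulVec (S α s)) i
        = c * ∫ s in (0:ℝ)..t, (exp ((t - s) • blockM A π α α)).mulVec (S α s) i := by
      rw [RFEAux.intervalIntegral_pi_apply _ 0 t hKSint i,
        ← intervalIntegral.integral_const_mul]
      apply intervalIntegral.integral_congr
      intro s _
      simp only [Matrix.mulVec, dotProduct, Finset.mul_sum]
      exact Finset.sum_congr rfl fun j _ => by rw [hKc (t - s) j]; ring
    rw [hJ, ← hc, Pi.add_apply, hJ0i, hIapp, hvoc α t i]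
    ring
  · -- the ODE for the compartment concentrations
    intro α t
    have hNfun : N α = fun s => ∑ i : {i : Ω // π i = α}, n s i.1 := funext fun s => hN α s
    rw [hNfun]
    have hd := HasDerivAt.fun_sum
      (fun (i : {i : Ω // π i = α}) (_ : i ∈ Finset.univ) => hODE' α i t)
    refine hd.congr_deriv ?_
    rw [Finset.sum_add_distrib]
    have hB : ∑ i : {i : Ω // π i = α}, (blockM A π α α).mulVec (fun j => n t j.1) i
        = - ∑ i : {i : Ω // π i = α}, J α t i := by
      simp only [Matrix.mulVec, dotProduct, blockM]
      rw [Finset.sum_comm, ← Finset.sum_neg_distrib]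
      apply Finset.sum_congr rfl
      intro j _
      have h0 : (∑ β ∈ Finset.univ.erase α, ∑ k : {k : Ω // π k = β}, A k.1 j.1)
          + ∑ k : {k : Ω // π k = α}, A k.1 j.1 = 0 := by
        rw [Finset.sum_erase_add _ _ (Finset.mem_univ α)]
        rw [Fintype.sum_fiberwise π (fun k => A k j.1)]
        exact hcolsum j.1
      rw [hJ]
      have : ∑ i : {i : Ω // π i = α}, A i.1 j.1 * n t j.1
          = (∑ i : {i : Ω // π i = α}, A i.1 j.1) * n t j.1 := by
        rw [Finset.sum_mul]
      rw [this]
      linear_combination n t j.1 * h0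
    rw [hB]
    ring
  · -- initial condition
    intro α
    rw [hN, ← hinit]
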